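/- Let A be a finite symbol set with weight function w : A → ℕ, w(a) ≥ 1 for all a, frequencies f : A → ℕ with f(a) ≥ 1 for all a, an integer z*, and an integer T ≥ 1. For each symbol a let N_a = {k ∈ ℕ : k ≥ f(a) and w(a) · ⌈T / k⌉ < z*}; assume every N_a is nonempty, write k*_a = min N_a and K* = Σ_{a ∈ A} k*_a. Then every feasible circular sequence S of length T with obj(S) < z* satisfies count_a(S) ≤ T - K* + k*_a for every symbol a. -/
import Mathlib


variable {A : Type*}

/-- The circular gap of sequence `S` at position `t` for symbol `a`:
the least positive `d` with `S ((t + d) % T) = a`. -/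
noncomputable def gap {T : ℕ} (S : Fin T → A) (a : A) (t : Fin T) : ℕ :=
  sInf {d : ℕ | 0 < d ∧ S ⟨(t.val + d) % T, Nat.mod_lt _ t.pos⟩ = a}

/-- Number of positions where symbol `a` occurs in `S`. -/
def count {T : ℕ} [DecidableEq A] (S : Fin T → A) (a : A) : ℕ :=
  (Finset.univ.filter fun t => S t = a).card

/-- `D_a(S)`: the maximum gap of symbol `a` over its positions in `S`. -/
noncomputable def Dmax {T : ℕ} [DecidableEq A] (S : Fin T → A) (a : A) : ℕ :=
  (Finset.univ.filter fun t => S t = a).sup (gap S a)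

/-- Objective value: max over occurring symbols of weight times maximum gap. -/
noncomputable def obj {T : ℕ} [Fintype A] [DecidableEq A] (w : A → ℕ) (S : Fin T → A) : ℕ :=
  (Finset.univ.filter fun a => 1 ≤ count S a).sup fun a => w a * Dmax S a

-- gap's defining set is nonempty when S t = a, containing T
lemma gap_set_mem_T {T : ℕ} (S : Fin T → A) (a : A) (t : Fin T) (h : S t = a) :
    T ∈ {d : ℕ | 0 < d ∧ S ⟨(t.val + d) % T, Nat.mod_lt _ t.pos⟩ = a} := by
  refine ⟨t.pos, ?_⟩
  have : (t.val + T) % T = t.val := by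
    rw [Nat.add_mod_right]; exact Nat.mod_eq_of_lt t.isLt
  convert h using 2
  exact Fin.ext this

lemma gap_mem {T : ℕ} (S : Fin T → A) (a : A) (t : Fin T) (h : S t = a) :
    0 < gap S a t ∧ S ⟨(t.val + gap S a t) % T, Nat.mod_lt _ t.pos⟩ = a :=
  Nat.sInf_mem ⟨T, gap_set_mem_T S a t h⟩

-- every position is covered: exists occurrence t and 1 ≤ d ≤ gap with (t+d)%T = s
lemma exists_cover {T : ℕ} (S : Fin T → A) (b : A) (s : Fin T)
    (p : Fin T) (hp : S p = b) :
    ∃ t : Fin T, S t = b ∧ ∃ d, 0 < d ∧ d ≤ gap S b t ∧ (t.val + d) % T = s.val := by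
  have hTpos : 0 < T := s.pos
  set D : Set ℕ := {d : ℕ | 0 < d ∧ d ≤ T ∧
      S ⟨(s.val + (T - d)) % T, Nat.mod_lt _ hTpos⟩ = b} with hD
  have hne : D.Nonempty := by
    by_cases hs : S s = b
    · refine ⟨T, hTpos, le_refl T, ?_⟩
      have : (s.val + (T - T)) % T = s.val := by
        simp [Nat.mod_eq_of_lt s.isLt]
      rw [show (⟨(s.val + (T - T)) % T, Nat.mod_lt _ hTpos⟩ : Fin T) = s from Fin.ext this]
      exact hs
    · rcases le_or_gt p.val s.val with hle | hlt
      · -- d = s - p if positive, else p = s contradiction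
        have hne' : p.val ≠ s.val := fun h => hs (by rwa [show s = p from Fin.ext h.symm])
        refine ⟨s.val - p.val, by omega, by omega, ?_⟩
        have h1 : s.val + (T - (s.val - p.val)) = T + p.val := by omega
        have h2 : (s.val + (T - (s.val - p.val))) % T = p.val := by
          rw [h1, Nat.add_mod_left, Nat.mod_eq_of_lt p.isLt]
        rw [show (⟨(s.val + (T - (s.val - p.val))) % T, Nat.mod_lt _ hTpos⟩ : Fin T) = p
          from Fin.ext h2]
        exact hp
      · refine ⟨s.val + T - p.val, by omega, by omega, ?_⟩
        have h1 : s.val + (T - (s.val + T - p.val)) = p.val := by omega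
        have h2 : (s.val + (T - (s.val + T - p.val))) % T = p.val := by
          rw [h1, Nat.mod_eq_of_lt p.isLt]
        rw [show (⟨(s.val + (T - (s.val + T - p.val))) % T, Nat.mod_lt _ hTpos⟩ : Fin T) = p
          from Fin.ext h2]
        exact hp
  set d := sInf D with hdDef
  obtain ⟨hd0, hdT, hdb⟩ : d ∈ D := Nat.sInf_mem hne
  set t : Fin T := ⟨(s.val + (T - d)) % T, Nat.mod_lt _ hTpos⟩ with ht
  refine ⟨t, hdb, d, hd0, ?_, ?_⟩
  · -- d ≤ gap S b t
    by_contra hlt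
    push_neg at hlt
    obtain ⟨hg0, hgb⟩ := gap_mem S b t hdb
    set g := gap S b t with hg
    have hmem : d - g ∈ D := by
      refine ⟨by omega, by omega, ?_⟩
      have : (s.val + (T - (d - g))) % T = (t.val + g) % T := by
        rw [ht]
        simp only [Nat.mod_add_mod]
        congr 1
        omega
      rw [show (⟨(s.val + (T - (d - g))) % T, Nat.mod_lt _ hTpos⟩ : Fin T)
          = ⟨(t.val + g) % T, Nat.mod_lt _ t.pos⟩ from Fin.ext this]
      exact hgb
    have := Nat.sInf_le hmem
    omega
  · -- (t + d) % T = s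
    rw [ht]
    simp only [Nat.mod_add_mod]
    have : s.val + (T - d) + d = s.val + T := by omega
    rw [this, Nat.add_mod_right, Nat.mod_eq_of_lt s.isLt]

lemma T_le_count_mul_Dmax {T : ℕ} [DecidableEq A] (S : Fin T → A) (b : A)
    (hocc : 1 ≤ count S b) : T ≤ count S b * Dmax S b := by
  classical
  obtain ⟨p, hpmem⟩ := Finset.card_pos.mp hocc
  have hp : S p = b := (Finset.mem_filter.mp hpmem).2
  set occ := Finset.univ.filter fun t => S t = b with hocc'
  have hsub : (Finset.univ : Finset (Fin T)) ⊆ occ.biUnion (fun t =>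
      (Finset.range (gap S b t)).image fun j => (⟨(t.val + (j + 1)) % T, Nat.mod_lt _ t.pos⟩ : Fin T)) := by
    intro s _
    obtain ⟨t, htb, d, hd0, hdg, hds⟩ := exists_cover S b s p hp
    refine Finset.mem_biUnion.mpr ⟨t, Finset.mem_filter.mpr ⟨Finset.mem_univ _, htb⟩, ?_⟩
    refine Finset.mem_image.mpr ⟨d - 1, Finset.mem_range.mpr (by omega), ?_⟩
    apply Fin.ext
    simp only []
    rw [show d - 1 + 1 = d by omega, hds]
  calc T = (Finset.univ : Finset (Fin T)).card := by simp
    _ ≤ _ := Finset.card_le_card hsub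
    _ ≤ ∑ t ∈ occ, ((Finset.range (gap S b t)).image fun j =>
          (⟨(t.val + (j + 1)) % T, Nat.mod_lt _ t.pos⟩ : Fin T)).card := Finset.card_biUnion_le
    _ ≤ ∑ t ∈ occ, gap S b t := by
        refine Finset.sum_le_sum fun t _ => ?_
        exact (Finset.card_image_le).trans (by simp)
    _ ≤ ∑ _t ∈ occ, Dmax S b := Finset.sum_le_sum fun t ht => Finset.le_sup ht
    _ = count S b * Dmax S b := by rw [Finset.sum_const, smul_eq_mul]; rfl

/-- upper bound `T - K* + k*_a` on the number of occurrences of each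
symbol in a feasible sequence improving on `z*`, where `k*_a = min N_a` and
`K* = Σ_a k*_a`. -/
theorem count_le_lifted_ub [Fintype A] [DecidableEq A]
    (w f : A → ℕ) (hw : ∀ a, 1 ≤ w a) (hf : ∀ a, 1 ≤ f a) (zstar : ℤ)
    (T : ℕ) (hT : 1 ≤ T)
    (hne : ∀ a : A,
      {k : ℕ | f a ≤ k ∧ ((w a * ((T + k - 1) / k) : ℕ) : ℤ) < zstar}.Nonempty)
    (kstar : A → ℕ)
    (hkstar : ∀ a : A,
      kstar a = sInf {k : ℕ | f a ≤ k ∧ ((w a * ((T + k - 1) / k) : ℕ) : ℤ) < zstar})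
    (Kstar : ℕ) (hKstar : Kstar = ∑ a : A, kstar a)
    (S : Fin T → A) (hfeas : ∀ a, f a ≤ count S a)
    (hobj : (obj w S : ℤ) < zstar) :
    ∀ a : A, (count S a : ℤ) ≤ (T : ℤ) - (Kstar : ℤ) + (kstar a : ℤ) := by
  intro a
  -- each symbol's count bounds
  have hk : ∀ b : A, kstar b ≤ count S b := by
    intro b
    have hocc : 1 ≤ count S b := le_trans (hf b) (hfeas b)
    have hTle : T ≤ count S b * Dmax S b := T_le_count_mul_Dmax S b hocc
    have hdiv : (T + count S b - 1) / count S b ≤ Dmax S b := by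
      have hlt : (T + count S b - 1) / count S b < Dmax S b + 1 := by
        rw [Nat.div_lt_iff_lt_mul (by omega : 0 < count S b)]
        have h1 : (Dmax S b + 1) * count S b = Dmax S b * count S b + count S b := by ring
        have h2 : count S b * Dmax S b = Dmax S b * count S b := Nat.mul_comm _ _
        omega
      omega
    have hwle : w b * ((T + count S b - 1) / count S b) ≤ obj w S := by
      calc w b * ((T + count S b - 1) / count S b) ≤ w b * Dmax S b :=
            Nat.mul_le_mul_left _ hdiv
        _ ≤ obj w S := Finset.le_sup (f := fun a => w a * Dmax S a)
            (Finset.mem_filter.mpr ⟨Finset.mem_univ _, hocc⟩)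
    have hmem : count S b ∈ {k : ℕ | f b ≤ k ∧ ((w b * ((T + k - 1) / k) : ℕ) : ℤ) < zstar} :=
      ⟨hfeas b, lt_of_le_of_lt (by exact_mod_cast hwle) hobj⟩
    rw [hkstar b]
    exact Nat.sInf_le hmem
  have hsum : ∑ b : A, count S b = T := by
    unfold count
    have h := Finset.card_eq_sum_card_fiberwise (f := S) (s := (Finset.univ : Finset (Fin T)))
      (t := (Finset.univ : Finset A)) (fun t _ => Finset.mem_univ (S t))
    simpa using h.symm
  have hsplitK : Kstar = kstar a + ∑ b ∈ Finset.univ.erase a, kstar b := by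
    rw [hKstar, ← Finset.add_sum_erase _ _ (Finset.mem_univ a)]
  have hsplitT : ∑ b : A, count S b = count S a + ∑ b ∈ Finset.univ.erase a, count S b :=
    (Finset.add_sum_erase _ _ (Finset.mem_univ a)).symm
  have hle : ∑ b ∈ Finset.univ.erase a, kstar b ≤ ∑ b ∈ Finset.univ.erase a, count S b :=
    Finset.sum_le_sum fun b _ => hk b
  omega
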